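/- arXiv:0909.4768 — 3 statements merged into one kernel-verified Lean document; each statement's English description precedes it below -/
import Mathlib

section
/- Let L ≥ 0 and let u : ℝ → ℝ satisfy the one-sided Lipschitz (Oleĭnik-type) condition u(y) − u(x) ≤ L·(y − x) for all x ≤ y. Then for every a ≤ b the total variation of u on the interval [a,b] is finite, and in fact eVariationOn u [a,b] ≤ 2·L·(b − a) + (u(a) − u(b)). In particular, any bounded function satisfying the Oleĭnik decay estimate u(t,y) − u(t,x) ≤ (y − x)/(κ t) for fixed t > 0 has locally bounded variation in x. -/
/-- Oleĭnik one-sided Lipschitz condition implies locally bounded variation: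
if `u y - u x ≤ L (y - x)` for `x ≤ y`, then on any interval `[a, b]` the
total variation of `u` is finite and bounded by `2 L (b - a) + (u a - u b)`. -/
theorem oleinik_one_sided_lipschitz_bounded_variation
    (L : ℝ) (hL : 0 ≤ L) (u : ℝ → ℝ)
    (h : ∀ x y : ℝ, x ≤ y → u y - u x ≤ L * (y - x)) :
    ∀ a b : ℝ, a ≤ b →
      eVariationOn u (Set.Icc a b) ≠ ⊤ ∧
      eVariationOn u (Set.Icc a b) ≤ ENNReal.ofReal (2 * L * (b - a) + (u a - u b)) := by
  intro a b hab
  set f : ℝ → ℝ := fun x => L * x - u x with hf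
  have hfmono : Monotone f := by
    intro x y hxy
    have h1 := h x y hxy
    simp only [hf]
    nlinarith
  have key : eVariationOn u (Set.Icc a b) ≤
      ENNReal.ofReal (2 * L * (b - a) + (u a - u b)) := by
    apply iSup_le
    rintro ⟨n, ⟨x, hx, hxs⟩⟩
    calc ∑ i ∈ Finset.range n, edist (u (x (i + 1))) (u (x i))
        = ENNReal.ofReal (∑ i ∈ Finset.range n, dist (u (x (i + 1))) (u (x i))) := by
          rw [ENNReal.ofReal_sum_of_nonneg (fun i _ => dist_nonneg)]
          simp [edist_dist]
      _ ≤ ENNReal.ofReal (2 * L * (b - a) + (u a - u b)) := by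
          apply ENNReal.ofReal_le_ofReal
          have step : ∀ i ∈ Finset.range n, dist (u (x (i + 1))) (u (x i)) ≤
              (L * x (i + 1) - L * x i) + (f (x (i + 1)) - f (x i)) := by
            intro i _
            have hxi : x i ≤ x (i + 1) := hx (Nat.le_succ i)
            have h1 := h (x i) (x (i + 1)) hxi
            rw [Real.dist_eq, abs_le]
            constructor <;> simp only [hf] <;> nlinarith
          calc ∑ i ∈ Finset.range n, dist (u (x (i + 1))) (u (x i))
              ≤ ∑ i ∈ Finset.range n,
                ((L * x (i + 1) - L * x i) + (f (x (i + 1)) - f (x i))) :=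
                Finset.sum_le_sum step
            _ = (L * x n - L * x 0) + (f (x n) - f (x 0)) := by
                rw [Finset.sum_add_distrib, Finset.sum_range_sub (fun i => L * x i),
                  Finset.sum_range_sub (fun i => f (x i))]
            _ ≤ 2 * L * (b - a) + (u a - u b) := by
                have h0 := hxs 0
                have hn := hxs n
                rw [Set.mem_Icc] at h0 hn
                have hfb : f (x n) ≤ f b := hfmono hn.2
                have hfa : f a ≤ f (x 0) := hfmono h0.1
                have : L * x n - L * x 0 ≤ L * b - L * a := by nlinarith
                simp only [hf] at hfb hfa ⊢
                nlinarith
  exact ⟨ne_top_of_le_ne_top ENNReal.ofReal_ne_top key, key⟩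
end

section
/- Let T > 0, C ≥ 0, K₀ ≥ 0, A ∈ ℝ, and let 0 = t₀ < t₁ < ⋯ < t_N = T be a finite partition of [0,T]. Let m : ℝ → ℝ be continuous and nonnegative on [0,T] and differentiable on each open subinterval (t_{j−1}, t_j). For each j = 1,…,N let φ_j : ℝ → ℝ be continuous on [t_{j−1}, t_j] and differentiable on (t_{j−1}, t_j), with φ_j'(t) ≥ 0 on (t_{j−1}, t_j), and suppose Σ_{j=1}^N (φ_j(t_j) − φ_j(t_{j−1})) ≤ K₀ and m'(t) + C·φ_j'(t)·m(t) ≥ A for all t ∈ (t_{j−1}, t_j), j = 1,…,N. Then A ≤ e^{C·K₀} · m(T)/T. -/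
/-- Piecewise Gronwall lemma: with a partition `0 = t₀ < t₁ < ⋯ < t_N = T`,
weights `φ_j` nondecreasing on each `(t_{j-1}, t_j)` whose total increase is
at most `K₀`, `m ≥ 0` continuous, and `m' + C φ_j' m ≥ A` on each open
subinterval, one gets `A ≤ e^{C K₀} m(T) / T`. -/
theorem piecewise_gronwall_decay
    (T C K₀ A : ℝ) (hT : 0 < T) (hC : 0 ≤ C) (hK₀ : 0 ≤ K₀)
    (N : ℕ) (hN : 0 < N) (t : ℕ → ℝ) (ht0 : t 0 = 0) (htN : t N = T)
    (htmono : ∀ j < N, t j < t (j + 1))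
    (m m' : ℝ → ℝ) (φ : ℕ → ℝ → ℝ) (φ' : ℕ → ℝ → ℝ)
    (hmc : ContinuousOn m (Set.Icc 0 T))
    (hm0 : ∀ s ∈ Set.Icc (0:ℝ) T, 0 ≤ m s)
    (hmd : ∀ j < N, ∀ s ∈ Set.Ioo (t j) (t (j + 1)), HasDerivAt m (m' s) s)
    (hφc : ∀ j < N, ContinuousOn (φ j) (Set.Icc (t j) (t (j + 1))))
    (hφd : ∀ j < N, ∀ s ∈ Set.Ioo (t j) (t (j + 1)), HasDerivAt (φ j) (φ' j s) s)
    (hφ'0 : ∀ j < N, ∀ s ∈ Set.Ioo (t j) (t (j + 1)), 0 ≤ φ' j s)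
    (hsum : ∑ j ∈ Finset.range N, (φ j (t (j + 1)) - φ j (t j)) ≤ K₀)
    (hineq : ∀ j < N, ∀ s ∈ Set.Ioo (t j) (t (j + 1)), A ≤ m' s + C * φ' j s * m s) :
    A ≤ Real.exp (C * K₀) * m T / T := by
  have hmT : 0 ≤ m T := hm0 T ⟨le_of_lt hT, le_refl T⟩
  rcases le_or_gt A 0 with hA | hA
  · have : (0:ℝ) ≤ Real.exp (C * K₀) * m T / T := by positivity
    linarith
  -- monotonicity of the partition points
  have tmono : ∀ i j, i ≤ j → j ≤ N → t i ≤ t j := by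
    intro i j hij hjN
    induction j with
    | zero => simp [Nat.le_zero.mp hij]
    | succ j ih =>
      rcases Nat.lt_or_ge i (j + 1) with h | h
      · exact le_trans (ih (Nat.lt_succ_iff.mp h) (le_trans (Nat.le_succ j) hjN))
          (le_of_lt (htmono j (Nat.lt_of_succ_le hjN)))
      · have : i = j + 1 := le_antisymm hij h
        simp [this]
  have hsubT : ∀ j ≤ N, t j ∈ Set.Icc (0:ℝ) T := by
    intro j hj
    constructor
    · rw [← ht0]; exact tmono 0 j (Nat.zero_le _) hj
    · rw [← htN]; exact tmono j N hj le_rfl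
  -- φ j is monotone on each closed subinterval
  have hφmono : ∀ j < N, MonotoneOn (φ j) (Set.Icc (t j) (t (j + 1))) := by
    intro j hj
    apply monotoneOn_of_hasDerivWithinAt_nonneg (convex_Icc _ _) (hφc j hj)
    · intro x hx
      rw [interior_Icc] at hx
      exact ((hφd j hj x hx).hasDerivWithinAt)
    · intro x hx
      rw [interior_Icc] at hx
      exact hφ'0 j hj x hx
  have hΔφ : ∀ j < N, 0 ≤ φ j (t (j + 1)) - φ j (t j) := by
    intro j hj
    have hab := le_of_lt (htmono j hj)
    have := hφmono j hj ⟨le_rfl, hab⟩ ⟨hab, le_rfl⟩ hab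
    linarith
  -- key inequality on each subinterval
  have key : ∀ j < N, m (t j) + A * (t (j + 1) - t j) ≤
      Real.exp (C * (φ j (t (j + 1)) - φ j (t j))) * m (t (j + 1)) := by
    intro j hj
    set a := t j with ha
    set b := t (j + 1) with hb
    have hab : a < b := htmono j hj
    have hIcc : Set.Icc a b ⊆ Set.Icc (0:ℝ) T := by
      apply Set.Icc_subset_Icc
      · exact (hsubT j (le_of_lt hj)).1
      · exact (hsubT (j + 1) hj).2
    set B : ℝ := A * Real.exp (C * φ j a) with hB
    set g : ℝ → ℝ := fun s => Real.exp (C * φ j s) * m s - B * s with hg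
    have hgmono : MonotoneOn g (Set.Icc a b) := by
      apply monotoneOn_of_hasDerivWithinAt_nonneg (convex_Icc _ _)
        (f' := fun s => Real.exp (C * φ j s) * (C * φ' j s) * m s
          + Real.exp (C * φ j s) * m' s - B)
      · apply ContinuousOn.sub
        · exact (((hφc j hj).const_smul C).rexp.mul (hmc.mono hIcc))
        · exact (continuous_const.mul continuous_id).continuousOn
      · intro x hx
        rw [interior_Icc] at hx
        have hd : HasDerivAt g (Real.exp (C * φ j x) * (C * φ' j x) * m x
            + Real.exp (C * φ j x) * m' x - B) x := by
          rw [hg]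
          have h1 : HasDerivAt (fun s => Real.exp (C * φ j s))
              (Real.exp (C * φ j x) * (C * φ' j x)) x :=
            ((hφd j hj x hx).const_mul C).exp
          have h2 := (h1.mul (hmd j hj x hx)).sub ((hasDerivAt_id x).const_mul B)
          exact h2.congr_deriv (by ring)
        exact hd.hasDerivWithinAt
      · intro x hx
        rw [interior_Icc] at hx
        have h1 : A ≤ m' x + C * φ' j x * m x := hineq j hj x hx
        have h2 : Real.exp (C * φ j a) ≤ Real.exp (C * φ j x) := by
          apply Real.exp_le_exp.mpr
          apply mul_le_mul_of_nonneg_left _ hC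
          exact hφmono j hj ⟨le_rfl, le_of_lt hab⟩ ⟨le_of_lt hx.1, le_of_lt hx.2⟩
            (le_of_lt hx.1)
        have hex : 0 < Real.exp (C * φ j x) := Real.exp_pos _
        have hexa : 0 < Real.exp (C * φ j a) := Real.exp_pos _
        have h3 : Real.exp (C * φ j x) * A ≤
            Real.exp (C * φ j x) * (m' x + C * φ' j x * m x) :=
          mul_le_mul_of_nonneg_left h1 (le_of_lt hex)
        have h4 : Real.exp (C * φ j a) * A ≤ Real.exp (C * φ j x) * A :=
          mul_le_mul_of_nonneg_right h2 (le_of_lt hA)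
        have : B ≤ Real.exp (C * φ j x) * (m' x + C * φ' j x * m x) := by
          rw [hB]; nlinarith
        nlinarith
    have hga : g a ≤ g b := hgmono ⟨le_rfl, le_of_lt hab⟩ ⟨le_of_lt hab, le_rfl⟩
      (le_of_lt hab)
    have hexa : 0 < Real.exp (C * φ j a) := Real.exp_pos _
    have hexp_eq : Real.exp (C * φ j b) =
        Real.exp (C * (φ j b - φ j a)) * Real.exp (C * φ j a) := by
      rw [← Real.exp_add]; ring_nf
    have hmain : Real.exp (C * φ j a) * (m a + A * (b - a)) ≤
        Real.exp (C * φ j a) * (Real.exp (C * (φ j b - φ j a)) * m b) := by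
      have := hga
      simp only [hg, hB] at this
      rw [hexp_eq] at this
      nlinarith
    exact le_of_mul_le_mul_left hmain hexa
  -- main induction
  have main : ∀ k ≤ N, A * t k ≤
      Real.exp (C * ∑ j ∈ Finset.range k, (φ j (t (j + 1)) - φ j (t j))) * m (t k) := by
    intro k hk
    induction k with
    | zero =>
      simp only [Finset.range_zero, Finset.sum_empty, mul_zero, ht0]
      have := hm0 (t 0) (hsubT 0 (Nat.zero_le _))
      rw [ht0] at this
      positivity
    | succ k ih =>
      have hkN : k < N := Nat.lt_of_succ_le hk
      have IH := ih (le_of_lt hkN)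
      set S := ∑ j ∈ Finset.range k, (φ j (t (j + 1)) - φ j (t j)) with hS
      have hS0 : 0 ≤ S := Finset.sum_nonneg fun j hj =>
        hΔφ j (lt_trans (Finset.mem_range.mp hj) hkN)
      set Δ := φ k (t (k + 1)) - φ k (t k) with hΔ
      have hΔ0 : 0 ≤ Δ := hΔφ k hkN
      have hsum_succ : ∑ j ∈ Finset.range (k + 1), (φ j (t (j + 1)) - φ j (t j)) = S + Δ := by
        rw [Finset.sum_range_succ]
      rw [hsum_succ]
      have hE : 1 ≤ Real.exp (C * S) := Real.one_le_exp (by positivity)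
      have hE0 : 0 < Real.exp (C * S) := Real.exp_pos _
      have hkey := key k hkN
      have hmul : Real.exp (C * S) * (m (t k) + A * (t (k + 1) - t k)) ≤
          Real.exp (C * S) * (Real.exp (C * Δ) * m (t (k + 1))) :=
        mul_le_mul_of_nonneg_left hkey (le_of_lt hE0)
      have hexp_split : Real.exp (C * (S + Δ)) = Real.exp (C * S) * Real.exp (C * Δ) := by
        rw [← Real.exp_add]; ring_nf
      rw [hexp_split]
      have hdt : 0 < t (k + 1) - t k := sub_pos.mpr (htmono k hkN)
      have hAdt : 0 ≤ A * (t (k + 1) - t k) := le_of_lt (mul_pos hA hdt)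
      nlinarith
  have hfinal := main N le_rfl
  rw [htN] at hfinal
  have hSK : C * ∑ j ∈ Finset.range N, (φ j (t (j + 1)) - φ j (t j)) ≤ C * K₀ :=
    mul_le_mul_of_nonneg_left hsum hC
  have hexp_le : Real.exp (C * ∑ j ∈ Finset.range N, (φ j (t (j + 1)) - φ j (t j))) ≤
      Real.exp (C * K₀) := Real.exp_le_exp.mpr hSK
  have : A * T ≤ Real.exp (C * K₀) * m T := by
    calc A * T ≤ Real.exp (C * ∑ j ∈ Finset.range N, (φ j (t (j + 1)) - φ j (t j))) * m T :=
          hfinal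
      _ ≤ Real.exp (C * K₀) * m T := mul_le_mul_of_nonneg_right hexp_le hmT
  rw [le_div_iff₀ hT]
  linarith
end

section
/- Let L > 0 and κ > 0, and let z : ℝ → ℝ be continuous on [0,∞) and differentiable on (0,∞), with z(t) > 0 for all t ≥ 0 and satisfying the differential inequality z'(t) ≤ L·z(t) − κ·z(t)² for all t > 0. Then z(t) ≤ e^{L t}/(κ t) for every t > 0. -/
/-- Riccati comparison: a positive function satisfying `z' ≤ L z - κ z²` on
`(0,∞)` obeys the Oleĭnik decay bound `z t ≤ e^{L t}/(κ t)` for `t > 0`. -/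
theorem riccati_comparison_decay
    (L κ : ℝ) (hL : 0 < L) (hκ : 0 < κ)
    (z z' : ℝ → ℝ)
    (hzc : ContinuousOn z (Set.Ici 0))
    (hzd : ∀ t ∈ Set.Ioi (0:ℝ), HasDerivAt z (z' t) t)
    (hzpos : ∀ t : ℝ, 0 ≤ t → 0 < z t)
    (hineq : ∀ t ∈ Set.Ioi (0:ℝ), z' t ≤ L * z t - κ * z t ^ 2) :
    ∀ t : ℝ, 0 < t → z t ≤ Real.exp (L * t) / (κ * t) := by
  set v : ℝ → ℝ := fun t => Real.exp (L * t) / z t with hv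
  have hzne : ∀ t ∈ Set.Ioi (0:ℝ), z t ≠ 0 := fun t ht => (hzpos t (le_of_lt ht)).ne'
  have hvd : ∀ t ∈ Set.Ioi (0:ℝ), HasDerivAt v
      ((L * Real.exp (L * t) * z t - Real.exp (L * t) * z' t) / (z t) ^ 2) t := by
    intro t ht
    have h1 : HasDerivAt (fun t : ℝ => Real.exp (L * t)) (L * Real.exp (L * t)) t := by
      have := (Real.hasDerivAt_exp (L * t)).comp t ((hasDerivAt_id t).const_mul L)
      exact this.congr_deriv (by ring)
    exact h1.div (hzd t ht) (hzne t ht)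
  have hvd' : ∀ t ∈ Set.Ioi (0:ℝ),
      κ ≤ (L * Real.exp (L * t) * z t - Real.exp (L * t) * z' t) / (z t) ^ 2 := by
    intro t ht
    have ht' : (0:ℝ) < t := ht
    have hz := hzpos t (le_of_lt ht')
    have he : (1:ℝ) ≤ Real.exp (L * t) := Real.one_le_exp (by positivity)
    have hnum : κ * z t ^ 2 ≤ L * Real.exp (L * t) * z t - Real.exp (L * t) * z' t := by
      have h2 : κ * z t ^ 2 ≤ L * z t - z' t := by linarith [hineq t ht]
      calc κ * z t ^ 2 = 1 * (κ * z t ^ 2) := by ring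
        _ ≤ Real.exp (L * t) * (L * z t - z' t) :=
            mul_le_mul he h2 (by positivity) (Real.exp_pos _).le
        _ = L * Real.exp (L * t) * z t - Real.exp (L * t) * z' t := by ring
    rw [le_div_iff₀ (by positivity)]
    linarith
  -- the function v t - κ t is monotone on (0, ∞)
  have hmono : MonotoneOn (fun t => v t - κ * t) (Set.Ioi 0) := by
    have hg : ∀ t ∈ Set.Ioi (0:ℝ), HasDerivAt (fun t => v t - κ * t)
        ((L * Real.exp (L * t) * z t - Real.exp (L * t) * z' t) / (z t) ^ 2 - κ) t := by
      intro t ht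
      exact ((hvd t ht).sub ((hasDerivAt_id t).const_mul κ)).congr_deriv (by ring)
    apply monotoneOn_of_deriv_nonneg (convex_Ioi 0)
    · intro t ht
      exact ((hg t ht).continuousAt).continuousWithinAt
    · rw [interior_Ioi]
      intro t ht
      exact (hg t ht).differentiableAt.differentiableWithinAt
    · rw [interior_Ioi]
      intro t ht
      rw [(hg t ht).deriv]
      linarith [hvd' t ht]
  have key : ∀ t, 0 < t → ∀ s, 0 < s → s < t → κ * t - κ * s ≤ v t := by
    intro t ht s hs hst
    have hm := hmono (Set.mem_Ioi.mpr hs) (Set.mem_Ioi.mpr ht) hst.le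
    have hvs : 0 < v s := div_pos (Real.exp_pos _) (hzpos s hs.le)
    simp only at hm
    linarith
  have hvt : ∀ t, 0 < t → κ * t ≤ v t := by
    intro t ht
    by_contra h
    push_neg at h
    set ε := κ * t - v t with hε
    have hεpos : 0 < ε := by linarith
    obtain ⟨s, hs0, hst, hsε⟩ : ∃ s, 0 < s ∧ s < t ∧ κ * s < ε := by
      refine ⟨min (t / 2) (ε / (2 * κ)), by positivity,
        lt_of_le_of_lt (min_le_left _ _) (by linarith), ?_⟩
      calc κ * min (t / 2) (ε / (2 * κ)) ≤ κ * (ε / (2 * κ)) :=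
            mul_le_mul_of_nonneg_left (min_le_right _ _) hκ.le
        _ = ε / 2 := by field_simp
        _ < ε := by linarith
    have := key t ht s hs0 hst
    linarith
  intro t ht
  have h1 : κ * t ≤ Real.exp (L * t) / z t := hvt t ht
  have hz := hzpos t ht.le
  rw [le_div_iff₀ hz] at h1
  rw [le_div_iff₀ (by positivity)]
  nlinarith [h1]
end
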